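/- Let M be a topological space, F : ℝ → M → M a family of maps (a flow map, F t x being the state reached from x after time t), σ ∈ ℂ with Re σ ≥ 0 and σ ≠ 0, and φ : M → ℂ a continuous function satisfying φ(F t x) = Complex.exp(σ·t)·φ(x) for all t ≥ 0 and all x ∈ M. Let x̂ satisfy F t x̂ = x̂ for all t ≥ 0, and let x ∈ M satisfy Tendsto (fun t => F t x) atTop (𝓝 x̂). Then φ(x) = φ(x̂) = 0. -/

import Mathlib

open Filter Topology

/-- Continuous-time form: a continuous Koopman eigenfunction with eigenvalue `σ`
(`Re σ ≥ 0`, `σ ≠ 0`) is constant (equal to `0 = φ(x̂)`) along trajectories in the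
stable manifold of an equilibrium `x̂`. -/
theorem stable_manifold_in_level_set_ct {M : Type*} [TopologicalSpace M]
    (F : ℝ → M → M) (σ : ℂ) (hσre : 0 ≤ σ.re) (hσ : σ ≠ 0)
    (φ : M → ℂ) (hφ : Continuous φ)
    (heig : ∀ t : ℝ, 0 ≤ t → ∀ x : M, φ (F t x) = Complex.exp (σ * t) * φ x)
    (xh : M) (hfix : ∀ t : ℝ, 0 ≤ t → F t xh = xh) (x : M)
    (hx : Tendsto (fun t => F t x) atTop (𝓝 xh)) :
    φ x = φ xh ∧ φ xh = 0 := by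
  -- Step 1: φ xh = 0
  have hxh : φ xh = 0 := by
    by_contra h
    have key : ∀ t : ℝ, 0 ≤ t → Complex.exp (σ * t) = 1 := by
      intro t ht
      have := heig t ht xh
      rw [hfix t ht] at this
      have h2 : (Complex.exp (σ * t) - 1) * φ xh = 0 := by linear_combination -this
      rcases mul_eq_zero.1 h2 with h3 | h3
      · exact sub_eq_zero.1 h3
      · exact absurd h3 h
    obtain ⟨n, hn⟩ := Complex.exp_eq_one_iff.1 (key 1 zero_le_one)
    obtain ⟨m, hm⟩ := Complex.exp_eq_one_iff.1 (key Real.pi Real.pi_pos.le)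
    push_cast at hn; rw [mul_one] at hn
    have hn0 : n ≠ 0 := by
      rintro rfl; simp at hn; exact hσ hn
    have : (n : ℂ) * (2 * Real.pi * Complex.I) * Real.pi
        = (m : ℂ) * (2 * Real.pi * Complex.I) := by rw [← hn, hm]
    have hI : (2 * (Real.pi : ℂ) * Complex.I) ≠ 0 := by
      simp [Complex.I_ne_zero, Real.pi_ne_zero]
    have hnm : (n : ℂ) * Real.pi = m := by
      field_simp at this
      have := mul_right_cancel₀ hI (by linear_combination (2 * (Real.pi : ℂ) * Complex.I) * this :
        ((n : ℂ) * Real.pi) * (2 * (Real.pi : ℂ) * Complex.I)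
          = (m : ℂ) * (2 * (Real.pi : ℂ) * Complex.I))
      exact this
    have hreal : (n : ℝ) * Real.pi = m := by
      have := congrArg Complex.re hnm
      simpa using this
    have hn0' : (n : ℝ) ≠ 0 := Int.cast_ne_zero.2 hn0
    exact irrational_pi ⟨(m : ℚ) / (n : ℚ), by
      push_cast
      field_simp
      linarith [hreal]⟩
  -- Step 2: φ x = 0
  have habs : ∀ t : ℝ, 0 ≤ t → ‖φ x‖ ≤ ‖φ (F t x)‖ := by
    intro t ht
    rw [heig t ht x, norm_mul, Complex.norm_exp]
    have : (σ * t).re = σ.re * t := by simp [Complex.mul_re]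
    rw [this]
    nlinarith [Real.one_le_exp (mul_nonneg hσre ht), norm_nonneg (φ x)]
  have hlim : Tendsto (fun t => ‖φ (F t x)‖) atTop (𝓝 0) := by
    have := (hφ.tendsto xh).comp hx
    have h2 := (continuous_norm.tendsto (φ xh)).comp this
    rwa [hxh, norm_zero] at h2
  have hx0 : ‖φ x‖ ≤ 0 :=
    ge_of_tendsto hlim (eventually_atTop.2 ⟨0, fun t ht => habs t ht⟩)
  have : φ x = 0 := by
    have := le_antisymm hx0 (norm_nonneg _)
    exact norm_eq_zero.1 this
  exact ⟨this.trans hxh.symm, hxh⟩
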